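/- Let ℬ be a von Neumann algebra and 𝒜 ⊂ ℬ a unital subalgebra with ℬ equal to the weak-* closed linear span of {ab^* : a, b ∈ 𝒜}. For i = 1,2 let φ_i : ℬ → L(H_i) be weak-* continuous 𝒜-morphisms (unital completely positive maps with φ_i(ax) = φ_i(a)φ_i(x) for a ∈ 𝒜, x ∈ ℬ) with minimal Stinespring representations (π_i, V_i, H_{π_i}). Then for every unitary U : H_1 → H_2 with Uφ_1(a) = φ_2(a)U for all a ∈ 𝒜, there is a unique unitary W : H_{π_1} → H_{π_2} with WV_1 = V_2U and Wπ_1(x) = π_2(x)W for all x ∈ ℬ. -/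

import Mathlib

set_option maxHeartbeats 2000000

open Filter Topology
open scoped InnerProductSpace

/-- weak-* continuous version of Arveson's uniqueness lemma. If `ℬ` is a
von Neumann algebra (realized on a Hilbert space `Hb`), `𝒜 ⊆ ℬ` a unital subalgebra with
`ℬ` the weak-* closed linear span of `𝒜𝒜^*` (formalized via bounded WOT-limits of nets),
and `φᵢ : ℬ → L(Hᵢ)` are weak-* continuous `𝒜`-morphisms with minimal Stinespring
representations `(πᵢ, Vᵢ, H_{πᵢ})`, then every unitary `U : H₁ → H₂` intertwining `φ₁`
and `φ₂` on `𝒜` lifts to a unique unitary `W : H_{π₁} → H_{π₂}` with `WV₁ = V₂U` and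
`Wπ₁(x) = π₂(x)W` for all `x ∈ ℬ`. -/
theorem stmt19 {Hb H₁ H₂ Hπ₁ Hπ₂ : Type*}
    [NormedAddCommGroup Hb] [InnerProductSpace ℂ Hb] [CompleteSpace Hb]
    [NormedAddCommGroup H₁] [InnerProductSpace ℂ H₁] [CompleteSpace H₁]
    [NormedAddCommGroup H₂] [InnerProductSpace ℂ H₂] [CompleteSpace H₂]
    [NormedAddCommGroup Hπ₁] [InnerProductSpace ℂ Hπ₁] [CompleteSpace Hπ₁]
    [NormedAddCommGroup Hπ₂] [InnerProductSpace ℂ Hπ₂] [CompleteSpace Hπ₂]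
    (ℬ : VonNeumannAlgebra Hb)
    -- 𝒜 is a unital subalgebra of ℬ
    (𝒜 : Subalgebra ℂ (Hb →L[ℂ] Hb)) (h𝒜ℬ : (𝒜 : Set (Hb →L[ℂ] Hb)) ⊆ ℬ)
    -- ℬ is the weak-* closed linear span of 𝒜𝒜^* (bounded WOT-limits of nets from it)
    (hspan : ∀ X ∈ ℬ, ∃ (ι : Type) (l : Filter ι), l.NeBot ∧
      ∃ (Y : ι → Hb →L[ℂ] Hb) (Cb : ℝ),
        (∀ i, Y i ∈ Submodule.span ℂ {x : Hb →L[ℂ] Hb | ∃ a ∈ 𝒜, ∃ b ∈ 𝒜, x = a * star b} ∧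
          ‖Y i‖ ≤ Cb) ∧
        ∀ ξ η : Hb, Tendsto (fun i => ⟪Y i ξ, η⟫_ℂ) l (𝓝 ⟪X ξ, η⟫_ℂ))
    -- the maps φ₁, φ₂
    (φ₁ : (Hb →L[ℂ] Hb) → (H₁ →L[ℂ] H₁)) (φ₂ : (Hb →L[ℂ] Hb) → (H₂ →L[ℂ] H₂))
    -- φᵢ are unital, linear, completely positive on ℬ
    (hφ₁add : ∀ X ∈ ℬ, ∀ Y ∈ ℬ, φ₁ (X + Y) = φ₁ X + φ₁ Y)
    (hφ₂add : ∀ X ∈ ℬ, ∀ Y ∈ ℬ, φ₂ (X + Y) = φ₂ X + φ₂ Y)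
    (hφ₁smul : ∀ (c : ℂ), ∀ X ∈ ℬ, φ₁ (c • X) = c • φ₁ X)
    (hφ₂smul : ∀ (c : ℂ), ∀ X ∈ ℬ, φ₂ (c • X) = c • φ₂ X)
    (hφ₁one : φ₁ 1 = 1) (hφ₂one : φ₂ 1 = 1)
    (hφ₁cp : ∀ (n : ℕ) (A : Fin n → Hb →L[ℂ] Hb), (∀ i, A i ∈ ℬ) →
      ∀ x : Fin n → H₁, 0 ≤ (∑ i, ∑ j, ⟪φ₁ (star (A i) * A j) (x j), x i⟫_ℂ).re)
    (hφ₂cp : ∀ (n : ℕ) (A : Fin n → Hb →L[ℂ] Hb), (∀ i, A i ∈ ℬ) →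
      ∀ x : Fin n → H₂, 0 ≤ (∑ i, ∑ j, ⟪φ₂ (star (A i) * A j) (x j), x i⟫_ℂ).re)
    -- φᵢ are 𝒜-morphisms
    (hφ₁mor : ∀ a ∈ 𝒜, ∀ X ∈ ℬ, φ₁ (a * X) = φ₁ a * φ₁ X)
    (hφ₂mor : ∀ a ∈ 𝒜, ∀ X ∈ ℬ, φ₂ (a * X) = φ₂ a * φ₂ X)
    -- φᵢ are weak-* continuous (WOT-continuous along bounded nets of elements of ℬ)
    (hφ₁wstar : ∀ {ι : Type*} (l : Filter ι) (X : ι → Hb →L[ℂ] Hb) (X₀ : Hb →L[ℂ] Hb)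
      (Cb : ℝ), (∀ i, X i ∈ ℬ) → X₀ ∈ ℬ → (∀ i, ‖X i‖ ≤ Cb) →
      (∀ ξ η : Hb, Tendsto (fun i => ⟪X i ξ, η⟫_ℂ) l (𝓝 ⟪X₀ ξ, η⟫_ℂ)) →
      ∀ ξ η : H₁, Tendsto (fun i => ⟪φ₁ (X i) ξ, η⟫_ℂ) l (𝓝 ⟪φ₁ X₀ ξ, η⟫_ℂ))
    (hφ₂wstar : ∀ {ι : Type*} (l : Filter ι) (X : ι → Hb →L[ℂ] Hb) (X₀ : Hb →L[ℂ] Hb)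
      (Cb : ℝ), (∀ i, X i ∈ ℬ) → X₀ ∈ ℬ → (∀ i, ‖X i‖ ≤ Cb) →
      (∀ ξ η : Hb, Tendsto (fun i => ⟪X i ξ, η⟫_ℂ) l (𝓝 ⟪X₀ ξ, η⟫_ℂ)) →
      ∀ ξ η : H₂, Tendsto (fun i => ⟪φ₂ (X i) ξ, η⟫_ℂ) l (𝓝 ⟪φ₂ X₀ ξ, η⟫_ℂ))
    -- Stinespring representations (πᵢ, Vᵢ, H_{πᵢ}) of φᵢ: πᵢ is a *-homomorphism on ℬ
    (π₁ : (Hb →L[ℂ] Hb) → (Hπ₁ →L[ℂ] Hπ₁)) (π₂ : (Hb →L[ℂ] Hb) → (Hπ₂ →L[ℂ] Hπ₂))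
    (hπ₁add : ∀ X ∈ ℬ, ∀ Y ∈ ℬ, π₁ (X + Y) = π₁ X + π₁ Y)
    (hπ₂add : ∀ X ∈ ℬ, ∀ Y ∈ ℬ, π₂ (X + Y) = π₂ X + π₂ Y)
    (hπ₁smul : ∀ (c : ℂ), ∀ X ∈ ℬ, π₁ (c • X) = c • π₁ X)
    (hπ₂smul : ∀ (c : ℂ), ∀ X ∈ ℬ, π₂ (c • X) = c • π₂ X)
    (hπ₁mul : ∀ X ∈ ℬ, ∀ Y ∈ ℬ, π₁ (X * Y) = π₁ X * π₁ Y)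
    (hπ₂mul : ∀ X ∈ ℬ, ∀ Y ∈ ℬ, π₂ (X * Y) = π₂ X * π₂ Y)
    (hπ₁star : ∀ X ∈ ℬ, π₁ (star X) = star (π₁ X))
    (hπ₂star : ∀ X ∈ ℬ, π₂ (star X) = star (π₂ X))
    (hπ₁one : π₁ 1 = 1) (hπ₂one : π₂ 1 = 1)
    (V₁ : H₁ →L[ℂ] Hπ₁) (hV₁ : ∀ h, ‖V₁ h‖ = ‖h‖)
    (V₂ : H₂ →L[ℂ] Hπ₂) (hV₂ : ∀ h, ‖V₂ h‖ = ‖h‖)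
    (hSt₁ : ∀ X ∈ ℬ, φ₁ X = V₁.adjoint ∘L π₁ X ∘L V₁)
    (hSt₂ : ∀ X ∈ ℬ, φ₂ X = V₂.adjoint ∘L π₂ X ∘L V₂)
    -- minimality of the Stinespring representations
    (hmin₁ : (Submodule.span ℂ
      {y : Hπ₁ | ∃ X ∈ ℬ, ∃ h : H₁, y = π₁ X (V₁ h)}).topologicalClosure = ⊤)
    (hmin₂ : (Submodule.span ℂ
      {y : Hπ₂ | ∃ X ∈ ℬ, ∃ h : H₂, y = π₂ X (V₂ h)}).topologicalClosure = ⊤) :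
    ∀ U : H₁ ≃ₗᵢ[ℂ] H₂, (∀ a ∈ 𝒜, ∀ h : H₁, U (φ₁ a h) = φ₂ a (U h)) →
      ∃! W : Hπ₁ ≃ₗᵢ[ℂ] Hπ₂,
        (∀ h : H₁, W (V₁ h) = V₂ (U h)) ∧
        ∀ X ∈ ℬ, ∀ ξ : Hπ₁, W (π₁ X ξ) = π₂ X (W ξ) := by
  
  intro U hU
  set Sgen : Set (Hb →L[ℂ] Hb) := {x : Hb →L[ℂ] Hb | ∃ a ∈ 𝒜, ∃ b ∈ 𝒜, x = a * star b}
    with hSgen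
  -- span of generators lies in ℬ
  have hAB : ∀ {Z : Hb →L[ℂ] Hb}, Z ∈ Submodule.span ℂ Sgen → Z ∈ ℬ := by
    intro Z hZ
    induction hZ using Submodule.span_induction with
    | mem x hx =>
      obtain ⟨a, ha, b, hb, rfl⟩ := hx
      exact mul_mem (h𝒜ℬ ha) (star_mem (h𝒜ℬ hb))
    | zero => exact zero_mem _
    | add x y hx hy ihx ihy => exact add_mem ihx ihy
    | smul c x hx ih => exact ℬ.toStarSubalgebra.smul_mem ih c
  have hφ₁zero : φ₁ 0 = 0 := by
    have h := hφ₁add 0 (zero_mem _) 0 (zero_mem _)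
    rw [add_zero] at h
    exact (add_eq_left.mp h.symm)
  have hφ₂zero : φ₂ 0 = 0 := by
    have h := hφ₂add 0 (zero_mem _) 0 (zero_mem _)
    rw [add_zero] at h
    exact (add_eq_left.mp h.symm)
  -- φᵢ are star preserving (via the Stinespring representation)
  have hφ₁star : ∀ X ∈ ℬ, φ₁ (star X) = ContinuousLinearMap.adjoint (φ₁ X) := by
    intro X hX
    rw [hSt₁ _ (star_mem hX), hSt₁ _ hX, hπ₁star _ hX]
    simp [ContinuousLinearMap.star_eq_adjoint, ContinuousLinearMap.adjoint_comp,
      ContinuousLinearMap.adjoint_adjoint, ContinuousLinearMap.comp_assoc]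
  have hφ₂star : ∀ X ∈ ℬ, φ₂ (star X) = ContinuousLinearMap.adjoint (φ₂ X) := by
    intro X hX
    rw [hSt₂ _ (star_mem hX), hSt₂ _ hX, hπ₂star _ hX]
    simp [ContinuousLinearMap.star_eq_adjoint, ContinuousLinearMap.adjoint_comp,
      ContinuousLinearMap.adjoint_adjoint, ContinuousLinearMap.comp_assoc]
  -- inner product formula for U
  have hUin : ∀ (x : H₁) (v : H₂), ⟪U x, v⟫_ℂ = ⟪x, U.symm v⟫_ℂ := by
    intro x v
    conv_lhs => rw [← U.apply_symm_apply v]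
    exact U.inner_map_map _ _
  -- U intertwines the adjoints of φᵢ(b), b ∈ 𝒜
  have hUad : ∀ b ∈ 𝒜, ∀ h : H₁,
      U (ContinuousLinearMap.adjoint (φ₁ b) h) = ContinuousLinearMap.adjoint (φ₂ b) (U h) := by
    intro b hb h
    apply ext_inner_right ℂ
    intro v
    have e1 : φ₁ b (U.symm v) = U.symm (φ₂ b v) := by
      apply U.injective
      rw [hU b hb, U.apply_symm_apply, U.apply_symm_apply]
    rw [hUin, ContinuousLinearMap.adjoint_inner_left, ContinuousLinearMap.adjoint_inner_left,
      e1, ← hUin]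
  -- U intertwines φᵢ on the generators and on their span
  have hspanZ : ∀ Z ∈ Submodule.span ℂ Sgen, ∀ h : H₁, U (φ₁ Z h) = φ₂ Z (U h) := by
    intro Z hZ
    induction hZ using Submodule.span_induction with
    | mem x hx =>
      obtain ⟨a, ha, b, hb, rfl⟩ := hx
      intro h
      have hbB : b ∈ ℬ := h𝒜ℬ hb
      have hsbB : star b ∈ ℬ := star_mem hbB
      rw [hφ₁mor a ha (star b) hsbB, hφ₂mor a ha (star b) hsbB,
        ContinuousLinearMap.mul_apply, ContinuousLinearMap.mul_apply,
        hφ₁star b hbB, hφ₂star b hbB, hU a ha, hUad b hb]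
    | zero => intro h; rw [hφ₁zero, hφ₂zero]; simp
    | add x y hx hy ihx ihy =>
      intro h
      rw [hφ₁add x (hAB hx) y (hAB hy), hφ₂add x (hAB hx) y (hAB hy)]
      simp [ihx, ihy]
    | smul c x hx ih =>
      intro h
      rw [hφ₁smul c x (hAB hx), hφ₂smul c x (hAB hx)]
      simp [ih]
  -- the key lemma: U intertwines φᵢ on all of ℬ
  have hkey : ∀ X ∈ ℬ, ∀ h : H₁, U (φ₁ X h) = φ₂ X (U h) := by
    intro X hX h
    obtain ⟨ι, l, hne, Y, Cb, hY, hconv⟩ := hspan X hX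
    apply ext_inner_right ℂ
    intro v
    have hYB : ∀ i, Y i ∈ ℬ := fun i => hAB (hY i).1
    haveI : (l.map ULift.up).NeBot := Filter.map_neBot
    have hconv' : ∀ ξ η : Hb, Tendsto (fun i : ULift ι => ⟪Y i.down ξ, η⟫_ℂ)
        (l.map ULift.up) (𝓝 ⟪X ξ, η⟫_ℂ) := fun ξ η => Filter.tendsto_map' (hconv ξ η)
    have t1 := hφ₁wstar (l.map ULift.up) (fun i => Y i.down) X Cb (fun i => hYB i.down) hX
      (fun i => (hY i.down).2) hconv' h (U.symm v)
    have t2 := hφ₂wstar (l.map ULift.up) (fun i => Y i.down) X Cb (fun i => hYB i.down) hX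
      (fun i => (hY i.down).2) hconv' (U h) v
    have heq : (fun i : ULift ι => ⟪φ₁ (Y i.down) h, U.symm v⟫_ℂ)
        = fun i : ULift ι => ⟪φ₂ (Y i.down) (U h), v⟫_ℂ := by
      funext i
      rw [← hUin (φ₁ (Y i.down) h) v, hspanZ (Y i.down) (hY i.down).1 h]
    rw [hUin]
    exact tendsto_nhds_unique (heq ▸ t1) t2
  -- the graph set
  set S : Set (Hπ₁ × Hπ₂) :=
    {p : Hπ₁ × Hπ₂ | ∃ X ∈ ℬ, ∃ h : H₁, p = (π₁ X (V₁ h), π₂ X (V₂ (U h)))} with hSdef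
  -- inner products of generators agree
  have hinner_gen : ∀ X ∈ ℬ, ∀ Y ∈ ℬ, ∀ (h k : H₁),
      ⟪π₁ X (V₁ h), π₁ Y (V₁ k)⟫_ℂ = ⟪π₂ X (V₂ (U h)), π₂ Y (V₂ (U k))⟫_ℂ := by
    intro X hX Y hY h k
    have hYs : star Y ∈ ℬ := star_mem hY
    have hYX : star Y * X ∈ ℬ := mul_mem hYs hX
    have e1 : ⟪π₁ X (V₁ h), π₁ Y (V₁ k)⟫_ℂ = ⟪φ₁ (star Y * X) h, k⟫_ℂ := by
      rw [← ContinuousLinearMap.adjoint_inner_left (π₁ Y) (V₁ k) (π₁ X (V₁ h)),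
        ← ContinuousLinearMap.star_eq_adjoint, ← hπ₁star Y hY,
        ← ContinuousLinearMap.mul_apply, ← hπ₁mul _ hYs _ hX,
        ← ContinuousLinearMap.adjoint_inner_left V₁ k, hSt₁ _ hYX]
      rfl
    have e2 : ⟪π₂ X (V₂ (U h)), π₂ Y (V₂ (U k))⟫_ℂ = ⟪φ₂ (star Y * X) (U h), U k⟫_ℂ := by
      rw [← ContinuousLinearMap.adjoint_inner_left (π₂ Y) (V₂ (U k)) (π₂ X (V₂ (U h))),
        ← ContinuousLinearMap.star_eq_adjoint, ← hπ₂star Y hY,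
        ← ContinuousLinearMap.mul_apply, ← hπ₂mul _ hYs _ hX,
        ← ContinuousLinearMap.adjoint_inner_left V₂ (U k), hSt₂ _ hYX]
      rfl
    rw [e1, e2, ← hkey _ hYX h, U.inner_map_map]
  -- inner products agree on the span of S
  have hinner_spanS : ∀ p ∈ Submodule.span ℂ S, ∀ q ∈ Submodule.span ℂ S,
      ⟪p.1, q.1⟫_ℂ = ⟪p.2, q.2⟫_ℂ := by
    have step1 : ∀ q ∈ S, ∀ p ∈ Submodule.span ℂ S, ⟪p.1, q.1⟫_ℂ = ⟪p.2, q.2⟫_ℂ := by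
      intro q hq p hp
      induction hp using Submodule.span_induction with
      | mem x hx =>
        obtain ⟨X, hX, h, rfl⟩ := hx
        obtain ⟨Y, hY, k, rfl⟩ := hq
        exact hinner_gen X hX Y hY h k
      | zero => simp
      | add x y hx hy ihx ihy => simp [Prod.fst_add, Prod.snd_add, inner_add_left, ihx, ihy]
      | smul c x hx ih => simp [Prod.smul_fst, Prod.smul_snd, inner_smul_left, ih]
    intro p hp q hq
    induction hq using Submodule.span_induction with
    | mem x hx => exact step1 x hx p hp
    | zero => simp
    | add x y hx hy ihx ihy => simp [Prod.fst_add, Prod.snd_add, inner_add_right, ihx, ihy]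
    | smul c x hx ih => simp [Prod.smul_fst, Prod.smul_snd, inner_smul_right, ih]
  set G : Submodule ℂ (Hπ₁ × Hπ₂) := (Submodule.span ℂ S).topologicalClosure with hGdef
  have hGclosure : ∀ {p : Hπ₁ × Hπ₂}, p ∈ G → p ∈ closure (↑(Submodule.span ℂ S) : Set (Hπ₁ × Hπ₂)) := by
    intro p hp
    rw [← Submodule.topologicalClosure_coe]
    exact hp
  -- inner products agree on G
  have hinner_G : ∀ p ∈ G, ∀ q ∈ G, ⟪p.1, q.1⟫_ℂ = ⟪p.2, q.2⟫_ℂ := by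
    have st1 : ∀ q' ∈ Submodule.span ℂ S, ∀ p' ∈ G, ⟪p'.1, q'.1⟫_ℂ = ⟪p'.2, q'.2⟫_ℂ := by
      intro q' hq' p' hp'
      have hcl : IsClosed {p : Hπ₁ × Hπ₂ | ⟪p.1, q'.1⟫_ℂ = ⟪p.2, q'.2⟫_ℂ} :=
        isClosed_eq (continuous_fst.inner continuous_const)
          (continuous_snd.inner continuous_const)
      exact closure_minimal (fun x hx => hinner_spanS x hx q' hq') hcl (hGclosure hp')
    intro p hp q hq
    have hcl2 : IsClosed {q' : Hπ₁ × Hπ₂ | ⟪p.1, q'.1⟫_ℂ = ⟪p.2, q'.2⟫_ℂ} :=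
      isClosed_eq (continuous_const.inner continuous_fst)
        (continuous_const.inner continuous_snd)
    exact closure_minimal (fun x hx => st1 x hx p hp) hcl2 (hGclosure hq)
  -- norms agree on G
  have hnormG : ∀ g : Hπ₁ × Hπ₂, g ∈ G → ‖g.1‖ = ‖g.2‖ := by
    intro g hg
    have h := hinner_G g hg g hg
    rw [inner_self_eq_norm_sq_to_K, inner_self_eq_norm_sq_to_K] at h
    have h2 : (‖g.1‖ : ℝ) ^ 2 = ‖g.2‖ ^ 2 := by exact_mod_cast h
    have h3 := congrArg Real.sqrt h2
    rwa [Real.sqrt_sq (norm_nonneg _), Real.sqrt_sq (norm_nonneg _)] at h3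
  have hGc : IsClosed (G : Set (Hπ₁ × Hπ₂)) := Submodule.isClosed_topologicalClosure _
  haveI : CompleteSpace G := hGc.completeSpace_coe
  -- the coordinate isometries
  set L₁ : G →ₗᵢ[ℂ] Hπ₁ :=
    { toLinearMap := (LinearMap.fst ℂ Hπ₁ Hπ₂) ∘ₗ G.subtype
      norm_map' := fun g => by
        have h := hnormG g g.2
        show ‖(g : Hπ₁ × Hπ₂).1‖ = ‖(g : Hπ₁ × Hπ₂)‖
        rw [Prod.norm_def, ← h, max_self] } with hL₁def
  set L₂ : G →ₗᵢ[ℂ] Hπ₂ :=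
    { toLinearMap := (LinearMap.snd ℂ Hπ₁ Hπ₂) ∘ₗ G.subtype
      norm_map' := fun g => by
        have h := hnormG g g.2
        show ‖(g : Hπ₁ × Hπ₂).2‖ = ‖(g : Hπ₁ × Hπ₂)‖
        rw [Prod.norm_def, h, max_self] } with hL₂def
  have hmemS : ∀ X ∈ ℬ, ∀ h : H₁, ((π₁ X (V₁ h), π₂ X (V₂ (U h))) : Hπ₁ × Hπ₂) ∈ G :=
    fun X hX h => Submodule.le_topologicalClosure _ (Submodule.subset_span ⟨X, hX, h, rfl⟩)
  have hL₁cl : IsClosed (Set.range ⇑L₁) := by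
    have hc : IsComplete (Set.range ⇑L₁) := by
      rw [← Set.image_univ]
      exact (isComplete_image_iff L₁.isometry.isUniformInducing).2 complete_univ
    exact hc.isClosed
  have hL₂cl : IsClosed (Set.range ⇑L₂) := by
    have hc : IsComplete (Set.range ⇑L₂) := by
      rw [← Set.image_univ]
      exact (isComplete_image_iff L₂.isometry.isUniformInducing).2 complete_univ
    exact hc.isClosed
  have hsurj₁ : Function.Surjective ⇑L₁ := by
    have hrange : (Submodule.span ℂ
        {y : Hπ₁ | ∃ X ∈ ℬ, ∃ h : H₁, y = π₁ X (V₁ h)}).topologicalClosure ≤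
        LinearMap.range L₁.toLinearMap := by
      apply Submodule.topologicalClosure_minimal
      · rw [Submodule.span_le]
        rintro y ⟨X, hX, h, rfl⟩
        exact ⟨⟨(π₁ X (V₁ h), π₂ X (V₂ (U h))), hmemS X hX h⟩, rfl⟩
      · exact hL₁cl
    intro y
    have hy : y ∈ LinearMap.range L₁.toLinearMap := hrange (hmin₁ ▸ Submodule.mem_top)
    obtain ⟨g, hg⟩ := hy
    exact ⟨g, hg⟩
  have hsurj₂ : Function.Surjective ⇑L₂ := by
    have hrange : (Submodule.span ℂ
        {y : Hπ₂ | ∃ X ∈ ℬ, ∃ h : H₂, y = π₂ X (V₂ h)}).topologicalClosure ≤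
        LinearMap.range L₂.toLinearMap := by
      apply Submodule.topologicalClosure_minimal
      · rw [Submodule.span_le]
        rintro y ⟨X, hX, h, rfl⟩
        exact ⟨⟨(π₁ X (V₁ (U.symm h)), π₂ X (V₂ (U (U.symm h)))),
          hmemS X hX (U.symm h)⟩, by simp; rfl⟩
      · exact hL₂cl
    intro y
    have hy : y ∈ LinearMap.range L₂.toLinearMap := hrange (hmin₂ ▸ Submodule.mem_top)
    obtain ⟨g, hg⟩ := hy
    exact ⟨g, hg⟩
  set e₁ : G ≃ₗᵢ[ℂ] Hπ₁ := LinearIsometryEquiv.ofSurjective L₁ hsurj₁ with he₁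
  set e₂ : G ≃ₗᵢ[ℂ] Hπ₂ := LinearIsometryEquiv.ofSurjective L₂ hsurj₂ with he₂
  set W : Hπ₁ ≃ₗᵢ[ℂ] Hπ₂ := e₁.symm.trans e₂ with hWdef
  have hWg : ∀ g : G, W ((g : Hπ₁ × Hπ₂).1) = (g : Hπ₁ × Hπ₂).2 := by
    intro g
    have h1 : e₁ g = (g : Hπ₁ × Hπ₂).1 := rfl
    show e₂ (e₁.symm ((g : Hπ₁ × Hπ₂).1)) = (g : Hπ₁ × Hπ₂).2
    rw [← h1, e₁.symm_apply_apply]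
    rfl
  have hWS : ∀ X ∈ ℬ, ∀ h : H₁, W (π₁ X (V₁ h)) = π₂ X (V₂ (U h)) :=
    fun X hX h => hWg ⟨_, hmemS X hX h⟩
  have hWV : ∀ h : H₁, W (V₁ h) = V₂ (U h) := by
    intro h
    have := hWS 1 (one_mem _) h
    simpa [hπ₁one, hπ₂one] using this
  -- dense span in Hπ₁
  have hdense₁ : closure (↑(Submodule.span ℂ
      {y : Hπ₁ | ∃ X ∈ ℬ, ∃ h : H₁, y = π₁ X (V₁ h)}) : Set Hπ₁) = Set.univ := by
    rw [← Submodule.topologicalClosure_coe, hmin₁, Submodule.top_coe]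
  have hWint : ∀ X ∈ ℬ, ∀ ξ : Hπ₁, W (π₁ X ξ) = π₂ X (W ξ) := by
    intro X hX ξ
    have hcl : IsClosed {ξ : Hπ₁ | W (π₁ X ξ) = π₂ X (W ξ)} :=
      isClosed_eq (W.continuous.comp (π₁ X).continuous)
        ((π₂ X).continuous.comp W.continuous)
    have hsub : (↑(Submodule.span ℂ {y : Hπ₁ | ∃ X ∈ ℬ, ∃ h : H₁, y = π₁ X (V₁ h)}) :
        Set Hπ₁) ⊆ {ξ : Hπ₁ | W (π₁ X ξ) = π₂ X (W ξ)} := by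
      intro y hy
      induction hy using Submodule.span_induction with
      | mem y hy =>
        obtain ⟨Y, hY, h, rfl⟩ := hy
        have hXY : X * Y ∈ ℬ := mul_mem hX hY
        show W (π₁ X (π₁ Y (V₁ h))) = π₂ X (W (π₁ Y (V₁ h)))
        rw [← ContinuousLinearMap.mul_apply, ← hπ₁mul _ hX _ hY, hWS _ hXY,
          hπ₂mul _ hX _ hY, ContinuousLinearMap.mul_apply, hWS _ hY]
      | zero => simp
      | add x y hx hy ihx ihy =>
        show W (π₁ X (x + y)) = π₂ X (W (x + y))
        simp only [map_add]
        rw [ihx, ihy]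
      | smul c x hx ih =>
        show W (π₁ X (c • x)) = π₂ X (W (c • x))
        simp only [map_smul]
        rw [ih]
    have hξ : ξ ∈ closure (↑(Submodule.span ℂ
        {y : Hπ₁ | ∃ X ∈ ℬ, ∃ h : H₁, y = π₁ X (V₁ h)}) : Set Hπ₁) := by
      rw [hdense₁]; trivial
    exact closure_minimal hsub hcl hξ
  refine ⟨W, ⟨hWV, hWint⟩, ?_⟩
  rintro W' ⟨hW'V, hW'int⟩
  apply LinearIsometryEquiv.ext
  intro ξ
  have hcl : IsClosed {ξ : Hπ₁ | W' ξ = W ξ} :=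
    isClosed_eq W'.continuous W.continuous
  have hsub : (↑(Submodule.span ℂ {y : Hπ₁ | ∃ X ∈ ℬ, ∃ h : H₁, y = π₁ X (V₁ h)}) :
      Set Hπ₁) ⊆ {ξ : Hπ₁ | W' ξ = W ξ} := by
    intro y hy
    induction hy using Submodule.span_induction with
    | mem y hy =>
      obtain ⟨Y, hY, h, rfl⟩ := hy
      show W' (π₁ Y (V₁ h)) = W (π₁ Y (V₁ h))
      rw [hW'int Y hY, hW'V, hWS _ hY]
    | zero => simp
    | add x y hx hy ihx ihy =>
      show W' (x + y) = W (x + y)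
      simp only [map_add]
      rw [ihx, ihy]
    | smul c x hx ih =>
      show W' (c • x) = W (c • x)
      simp only [map_smul]
      rw [ih]
  have hξ : ξ ∈ closure (↑(Submodule.span ℂ
      {y : Hπ₁ | ∃ X ∈ ℬ, ∃ h : H₁, y = π₁ X (V₁ h)}) : Set Hπ₁) := by
    rw [hdense₁]; trivial
  exact closure_minimal hsub hcl hξ
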